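/- Let I be a finite index set, b_0 ∈ ℝ ∪ {∞}, b_i ∈ ℝ ∪ {∞} for i ∈ I, and ε > 0. Then b_0 ≤ min_{i ∈ I} b_i if and only if for every ℓ ∈ I one has min( b_0, min_{i ∈ I \ {ℓ}} (b_i + ε) ) ≤ b_ℓ. -/

import Mathlib

/-- For a finite index set `I`, `b₀, b_i ∈ ℝ ∪ {∞}` and `ε > 0`:
`b₀ ≤ min_{i ∈ I} b_i` if and only if for every `ℓ ∈ I` one has
`min(b₀, min_{i ∈ I \ {ℓ}} (b_i + ε)) ≤ b_ℓ`. -/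
theorem stmt_6 {ι : Type} [DecidableEq ι] (I : Finset ι)
    (b₀ : WithTop ℝ) (b : ι → WithTop ℝ) (ε : ℝ) (hε : 0 < ε) :
    b₀ ≤ I.inf b ↔
      ∀ ℓ ∈ I, min b₀ ((I.erase ℓ).inf fun i => b i + (ε : WithTop ℝ)) ≤ b ℓ := by
  constructor
  · intro h ℓ hℓ
    exact le_trans (min_le_left _ _) (h.trans (Finset.inf_le hℓ))
  · intro h
    by_contra hc
    push_neg at hc
    have hne : I.Nonempty := by
      rcases I.eq_empty_or_nonempty with rfl | hne
      · simp at hc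
      · exact hne
    obtain ⟨ℓ, hℓ, hℓeq⟩ := Finset.exists_mem_eq_inf I hne b
    have hm : I.inf b < b₀ := hc
    have hmin := h ℓ hℓ
    have h2 : (I.erase ℓ).inf (fun i => b i + (ε : WithTop ℝ)) ≤ b ℓ := by
      rcases min_le_iff.mp hmin with h1 | h2
      · exact absurd (hℓeq ▸ h1 : b₀ ≤ I.inf b) (not_le.mpr hm)
      · exact h2
    have h3 : I.inf b + (ε : WithTop ℝ) ≤ (I.erase ℓ).inf (fun i => b i + (ε : WithTop ℝ)) := by
      apply Finset.le_inf
      intro i hi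
      exact add_le_add (Finset.inf_le (f := b) (Finset.mem_of_mem_erase hi)) le_rfl
    have h4 : I.inf b + (ε : WithTop ℝ) ≤ I.inf b := (h3.trans h2).trans_eq hℓeq.symm
    have htop : I.inf b ≠ ⊤ := hm.ne_top
    obtain ⟨r, hr⟩ := WithTop.ne_top_iff_exists.mp htop
    rw [← hr] at h4
    rw [← WithTop.coe_add, WithTop.coe_le_coe] at h4
    linarith
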